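/- Let k be a field of characteristic 2, G a finite group, and h a hermitian element of k[G] with δ_s(h) = 0 for every s ∈ G of order 2; let q_h(a, b) = δ(a·h·b*). Then q_h(x, x) = t(h)·t(x)² for every x ∈ k[G]. If moreover h is invertible, then there exists e ∈ k[G] with σ_G·x = q_h(x, e)·e for all x ∈ k[G] (where σ_G = Σ_{g∈G} g) if and only if t(h) is a square in k; in that case, if t(h) = μ² with μ ∈ k, then e = μ⁻¹·σ_G has this property. -/

import Mathlib

set_option linter.unusedSectionVars false

/-- The canonical involution `x ↦ x*` of the group algebra `k[G]`, determined by
`g* = g⁻¹` for `g ∈ G`. -/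
noncomputable def gStar {k G : Type*} [Semiring k] [Group G] (x : MonoidAlgebra k G) :
    MonoidAlgebra k G := MonoidAlgebra.ofCoeff (Finsupp.equivMapDomain (Equiv.inv G) x.coeff)

/-- The form `q_h(a,b) = δ(a·h·b*)` associated to an element `h` of `k[G]`,
where `δ` is the coefficient of the identity. -/
noncomputable def qForm {k G : Type*} [Field k] [Group G] (h a b : MonoidAlgebra k G) :
    k := (a * h * gStar b).coeff 1

/-- The augmentation `t(x) = Σ_g x_g` of `k[G]`. -/
noncomputable def aug {k G : Type*} [Field k] [Group G] [Fintype G]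
    (x : MonoidAlgebra k G) : k := ∑ g : G, x.coeff g

/-- The element `σ_G = Σ_{g ∈ G} g` of `k[G]`. -/
noncomputable def sigmaG (k G : Type*) [Field k] [Group G] [Fintype G] :
    MonoidAlgebra k G := ∑ g : G, MonoidAlgebra.of k G g

section Aux

variable {k G : Type*} [Field k] [Group G] [Fintype G]

lemma gStar_apply (x : MonoidAlgebra k G) (g : G) : (gStar x).coeff g = x.coeff g⁻¹ := rfl

lemma gStar_smul (c : k) (x : MonoidAlgebra k G) : gStar (c • x) = c • gStar x := by
  ext g; rw [gStar_apply, MonoidAlgebra.coeff_smul_apply, MonoidAlgebra.coeff_smul_apply, gStar_apply]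

lemma mul_apply_univ (f g : MonoidAlgebra k G) (x : G) :
    (f * g).coeff x = ∑ a : G, f.coeff a * g.coeff (a⁻¹ * x) := by
  rw [MonoidAlgebra.coeff_mul_apply_left, Finsupp.sum]
  exact Finset.sum_subset (Finset.subset_univ _) (fun a _ ha => by
    simp [Finsupp.notMem_support_iff.mp ha])

lemma aug_mul (x y : MonoidAlgebra k G) : aug (x * y) = aug x * aug y := by
  have key : ∀ a : G, ∑ g : G, y.coeff (a⁻¹ * g) = aug y := fun a =>
    Fintype.sum_equiv (Equiv.mulLeft a⁻¹) (fun g => y.coeff (a⁻¹ * g)) (fun g => y.coeff g) (fun g => rfl)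
  calc aug (x * y) = ∑ a : G, x.coeff a * ∑ g : G, y.coeff (a⁻¹ * g) := by
        simp only [aug, mul_apply_univ]
        rw [Finset.sum_comm]
        exact Finset.sum_congr rfl fun a _ => (Finset.mul_sum _ _ _).symm
    _ = ∑ a : G, x.coeff a * aug y := by simp only [key]
    _ = aug x * aug y := by simp only [aug, Finset.sum_mul]

lemma aug_one : aug (1 : MonoidAlgebra k G) = 1 := by
  classical
  simp [aug, MonoidAlgebra.one_def, MonoidAlgebra.coeff_single, Finsupp.single_apply]

lemma sigmaG_apply (g : G) : (sigmaG k G).coeff g = 1 := by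
  classical
  rw [sigmaG, MonoidAlgebra.coeff_sum, Finset.sum_apply']
  simp [Finsupp.single_apply, MonoidAlgebra.of_apply, MonoidAlgebra.coeff_single]

lemma gStar_sigmaG : gStar (sigmaG k G) = sigmaG k G := by
  ext g; rw [gStar_apply, sigmaG_apply, sigmaG_apply]

lemma mul_sigmaG_one (y : MonoidAlgebra k G) : (y * sigmaG k G).coeff 1 = aug y := by
  rw [mul_apply_univ]
  simp [sigmaG_apply, aug]

lemma sigmaG_mul (x : MonoidAlgebra k G) : sigmaG k G * x = aug x • sigmaG k G := by
  ext g
  rw [mul_apply_univ, MonoidAlgebra.coeff_smul_apply, sigmaG_apply, smul_eq_mul, mul_one, aug]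
  simp only [sigmaG_apply, one_mul]
  exact Fintype.sum_equiv ((Equiv.inv G).trans (Equiv.mulRight g)) (fun a => x.coeff (a⁻¹ * g)) x.coeff
    (fun a => rfl)

lemma qForm_smul (h x e : MonoidAlgebra k G) (c : k) :
    qForm h x (c • e) = c * qForm h x e := by
  show (x * h * gStar (c • e)).coeff 1 = c * (x * h * gStar e).coeff 1
  rw [gStar_smul, mul_smul_comm]
  rfl

lemma qForm_sigmaG (h x : MonoidAlgebra k G) :
    qForm h x (sigmaG k G) = aug x * aug h := by
  rw [qForm, gStar_sigmaG, mul_sigmaG_one, aug_mul]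

lemma aug_ne_zero {h : MonoidAlgebra k G} (hu : IsUnit h) : aug h ≠ 0 := by
  obtain ⟨u, rfl⟩ := hu
  intro h0
  have : aug ((u : MonoidAlgebra k G) * (↑u⁻¹ : MonoidAlgebra k G)) = 1 := by
    rw [u.mul_inv]; exact aug_one
  rw [aug_mul, h0, zero_mul] at this
  exact zero_ne_one this

end Aux

/-- Serre's proposition 7.6.12: let `k` be a field of characteristic 2, `G` a finite
group, `h` a hermitian element of `k[G]` with `δ_s(h) = 0` for all `s` of order 2, and
`q_h(a,b) = δ(a·h·b*)`. Then `q_h(x,x) = t(h)·t(x)²` for all `x`. If moreover `h` is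
invertible, then there exists `e` with `σ_G·x = q_h(x,e)·e` for all `x` iff `t(h)` is a
square in `k`; and if `t(h) = μ²`, then `e = μ⁻¹·σ_G` works. -/
theorem stmt_16 (k G : Type*) [Field k] [CharP k 2] [Group G] [Fintype G]
    (h : MonoidAlgebra k G) (hherm : gStar h = h)
    (hspec : ∀ s : G, orderOf s = 2 → h.coeff s = 0) :
    (∀ x : MonoidAlgebra k G, qForm h x x = aug h * aug x ^ 2) ∧
    (IsUnit h →
      ((∃ e : MonoidAlgebra k G, ∀ x : MonoidAlgebra k G,
            sigmaG k G * x = qForm h x e • e) ↔ IsSquare (aug h)) ∧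
      ∀ μ : k, aug h = μ ^ 2 → ∀ x : MonoidAlgebra k G,
        sigmaG k G * x = qForm h x (μ⁻¹ • sigmaG k G) • (μ⁻¹ • sigmaG k G)) := by
  classical
  have hsym : ∀ s : G, h.coeff s⁻¹ = h.coeff s := fun s => by
    conv_rhs => rw [← hherm]
    rfl
  -- t(h) = h 1
  have haug : aug h = h.coeff 1 := by
    rw [aug, ← Finset.sum_erase_add _ _ (Finset.mem_univ (1 : G))]
    rw [Finset.sum_involution (fun s _ => s⁻¹)
      (fun a _ => by show h.coeff a + h.coeff a⁻¹ = 0; rw [hsym a]; exact CharTwo.add_self_eq_zero _)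
      (fun a ha hfa => ?_) (fun a ha => ?_) (fun a ha => inv_inv a), zero_add]
    · show a⁻¹ ≠ a
      intro heq
      apply hfa
      have h1 : a ≠ 1 := (Finset.mem_erase.mp ha).1
      refine hspec a (orderOf_eq_prime ?_ h1)
      have h2 : a * a = 1 := by nth_rewrite 1 [← heq]; exact inv_mul_cancel a
      rw [pow_two]; exact h2
    · show a⁻¹ ∈ Finset.univ.erase 1
      simp only [Finset.mem_erase, Finset.mem_univ, and_true] at ha ⊢
      simpa using ha
  -- Part 1
  have part1 : ∀ x : MonoidAlgebra k G, qForm h x x = aug h * aug x ^ 2 := by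
    intro x
    set F : G × G → k := fun p => x.coeff p.2 * h.coeff (p.2⁻¹ * p.1) * x.coeff p.1 with hF
    have e1 : qForm h x x = ∑ p ∈ Finset.univ ×ˢ Finset.univ, F p := by
      rw [Finset.sum_product]
      show (x * h * gStar x).coeff 1 = _
      rw [mul_apply_univ]
      refine Finset.sum_congr rfl fun a _ => ?_
      rw [mul_apply_univ, Finset.sum_mul]
      refine Finset.sum_congr rfl fun b _ => ?_
      have : (gStar x).coeff (a⁻¹ * 1) = x.coeff a := by rw [gStar_apply]; simp
      rw [this]
    have e2 : ∑ p ∈ (Finset.univ : Finset G).offDiag, F p = 0 := by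
      refine Finset.sum_involution (fun p _ => p.swap) (fun p hp => ?_) (fun p hp hFp => ?_)
        (fun p hp => ?_) (fun p hp => Prod.swap_swap p)
      · show F p + F p.swap = 0
        have : F p.swap = F p := by
          show x.coeff p.1 * h.coeff (p.1⁻¹ * p.2) * x.coeff p.2 = x.coeff p.2 * h.coeff (p.2⁻¹ * p.1) * x.coeff p.1
          have : h.coeff (p.1⁻¹ * p.2) = h.coeff (p.2⁻¹ * p.1) := by
            rw [← hsym (p.2⁻¹ * p.1), mul_inv_rev, inv_inv]
          rw [this]; ring
        rw [this]
        exact CharTwo.add_self_eq_zero _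
      · show p.swap ≠ p
        have hne := (Finset.mem_offDiag.mp hp).2.2
        intro hsw
        exact hne (congrArg Prod.snd hsw)
      · show p.swap ∈ (Finset.univ : Finset G).offDiag
        obtain ⟨-, -, hne⟩ := Finset.mem_offDiag.mp hp
        exact Finset.mem_offDiag.mpr ⟨Finset.mem_univ _, Finset.mem_univ _, fun hh => hne hh.symm⟩
    have e3 : ∑ p ∈ (Finset.univ : Finset G).diag, F p = h.coeff 1 * aug x ^ 2 := by
      rw [Finset.sum_diag]
      have : ∀ a : G, F (a, a) = h.coeff 1 * (x.coeff a * x.coeff a) := by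
        intro a
        show x.coeff a * h.coeff (a⁻¹ * a) * x.coeff a = _
        rw [inv_mul_cancel]; ring
      simp only [this, ← Finset.mul_sum]
      congr 1
      rw [← CharTwo.sum_mul_self, aug, pow_two]
    rw [e1, ← Finset.diag_union_offDiag (Finset.univ : Finset G),
      Finset.sum_union (Finset.disjoint_diag_offDiag _), e2, e3, add_zero, haug]
  refine ⟨part1, fun hu => ?_⟩
  have h1ne : aug h ≠ 0 := aug_ne_zero hu
  -- the third claim
  have third : ∀ μ : k, aug h = μ ^ 2 → ∀ x : MonoidAlgebra k G,
      sigmaG k G * x = qForm h x (μ⁻¹ • sigmaG k G) • (μ⁻¹ • sigmaG k G) := by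
    intro μ hμ x
    have hμ0 : μ ≠ 0 := by
      intro h0; rw [h0] at hμ; simp at hμ; exact h1ne hμ
    rw [sigmaG_mul, qForm_smul, qForm_sigmaG, hμ, smul_smul]
    congr 1
    field_simp
  refine ⟨⟨?_, ?_⟩, third⟩
  · rintro ⟨e, he⟩
    set c := qForm h 1 e with hc_def
    have h1 : sigmaG k G = c • e := by
      have := he 1; rwa [mul_one] at this
    have hc : c ≠ 0 := by
      intro h0
      rw [h0, zero_smul] at h1
      have h2 : (sigmaG k G).coeff 1 = (0 : MonoidAlgebra k G).coeff 1 := by rw [h1]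
      rw [sigmaG_apply] at h2
      simpa using h2
    have he' : e = c⁻¹ • sigmaG k G := by
      rw [h1, smul_smul, inv_mul_cancel₀ hc, one_smul]
    have h2 := he 1
    rw [mul_one, he', qForm_smul, qForm_sigmaG, aug_one, one_mul, smul_smul] at h2
    have h4 := congrArg (fun z : MonoidAlgebra k G => z.coeff 1) h2
    rw [show (((c⁻¹ * aug h * c⁻¹)) • sigmaG k G).coeff 1 = (c⁻¹ * aug h * c⁻¹) * (sigmaG k G).coeff 1 from rfl,
      sigmaG_apply, mul_one] at h4
    refine ⟨c, ?_⟩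
    field_simp at h4
    rw [h4.symm, pow_two]
  · rintro ⟨r, hr⟩
    exact ⟨r⁻¹ • sigmaG k G, third r (by rw [hr, pow_two])⟩
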